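/- There exists a constant c > 0 with the following property: for every M ∈ ℕ there exists an integer m ≥ M such that m is a sum of two squares and no integer n with m < n < m + c·log m is a sum of two squares. In other words, the increasing enumeration (ω_n) of the set {k₁² + k₂² : k₁, k₂ ∈ ℤ} contains infinitely many n with ω_{n+1} − ω_n ≥ c·log ω_n. -/

import Mathlib

open Finset


/-- A number divisible by an odd power (exactly) of a prime `p ≡ 3 mod 4`
is not a sum of two squares. -/
private lemma not_sots_of_odd_val {x p t : ℕ} (hp : p.Prime) (h3 : p % 4 = 3)
    (ht : Odd t) (h1 : p ^ t ∣ x) (h2 : ¬ p ^ (t + 1) ∣ x) :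
    ¬ ∃ a b : ℕ, x = a ^ 2 + b ^ 2 := by
  intro hS
  have hx0 : x ≠ 0 := by rintro rfl; exact h2 (dvd_zero _)
  have hf : x.factorization p = t := by
    have hle : t ≤ x.factorization p := (hp.pow_dvd_iff_le_factorization hx0).mp h1
    have hlt : x.factorization p < t + 1 := by
      by_contra hcon
      exact h2 ((hp.pow_dvd_iff_le_factorization hx0).mpr (by omega))
    omega
  have hpv : x.factorization p = padicValNat p x := Nat.factorization_def x hp
  have heven := Nat.eq_sq_add_sq_iff.mp hS p (Nat.mem_primeFactors.mpr ⟨hp, dvd_trans (dvd_pow_self p ht.pos.ne') h1, hx0⟩) h3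
  rw [← hpv, hf] at heven
  exact (Nat.not_even_iff_odd.mpr ht) heven

/-- Any odd number that is `3 mod 4` has a prime factor `p ≡ 3 mod 4`
occurring to an odd power (exactly). -/
private lemma exists_prime_odd_val :
    ∀ m : ℕ, Odd m → m % 4 = 3 →
      ∃ p t : ℕ, p.Prime ∧ p % 4 = 3 ∧ Odd t ∧ p ^ t ∣ m ∧ ¬ p ^ (t + 1) ∣ m := by
  intro m
  induction m using Nat.strong_induction_on with
  | _ m IH =>
    intro hodd h4
    have hmod2 : m % 2 = 1 := Nat.odd_iff.mp hodd
    have hm0 : m ≠ 0 := by omega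
    have hm1 : m ≠ 1 := by omega
    set q := m.minFac with hqdef
    have hqp : q.Prime := Nat.minFac_prime hm1
    have hqd : q ∣ m := Nat.minFac_dvd m
    have hq2 : q ≠ 2 := by
      rintro h2
      rw [h2] at hqd
      omega
    have hqodd : q % 2 = 1 := Nat.odd_iff.mp (hqp.odd_of_ne_two hq2)
    set t := m.factorization q with htdef
    have ht1 : 1 ≤ t := (hqp.dvd_iff_one_le_factorization hm0).mp hqd
    have hqt_dvd : q ^ t ∣ m := Nat.ordProj_dvd m q
    have hqt_not : ¬ q ^ (t + 1) ∣ m := Nat.pow_succ_factorization_not_dvd hm0 hqp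
    set m' := m / q ^ t with hm'def
    have hmm' : q ^ t * m' = m := Nat.ordProj_mul_ordCompl_eq_self m q
    have hqnd : ¬ q ∣ m' := Nat.not_dvd_ordCompl hqp hm0
    have hm'd : m' ∣ m := Nat.ordCompl_dvd m q
    have hm'odd : Odd m' := by
      rw [Nat.odd_iff]
      rcases Nat.even_or_odd m' with he | ho
      · exfalso
        obtain ⟨r, hr⟩ := he
        have : (2 : ℕ) ∣ m := dvd_trans ⟨r, by omega⟩ hm'd
        omega
      · exact Nat.odd_iff.mp ho
    have hqt1 : 1 < q ^ t :=
      Nat.one_lt_pow (by omega) hqp.one_lt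
    have hm'lt : m' < m := Nat.div_lt_self (by omega) hqt1
    have hq14 : q % 4 = 1 ∨ q % 4 = 3 := by omega
    -- helper for the recursive cases
    have hrec : q ^ t % 4 = 1 →
        ∃ p s : ℕ, p.Prime ∧ p % 4 = 3 ∧ Odd s ∧ p ^ s ∣ m ∧ ¬ p ^ (s + 1) ∣ m := by
      intro hq1t
      have hm'4 : m' % 4 = 3 := by
        have h1 : (q ^ t * m') % 4 = m % 4 := by rw [hmm']
        rw [Nat.mul_mod, hq1t, one_mul] at h1
        omega
      obtain ⟨p, s, hp, hp3, hs, hps, hpns⟩ := IH m' hm'lt hm'odd hm'4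
      have hs0 : s ≠ 0 := by
        have := Nat.odd_iff.mp hs; omega
      have hpd : p ∣ m' := dvd_trans (dvd_pow_self p hs0) hps
      have hpq : p ≠ q := fun h => hqnd (h ▸ hpd)
      refine ⟨p, s, hp, hp3, hs, hps.trans hm'd, fun hdvd => ?_⟩
      have hcop : Nat.Coprime (p ^ (s + 1)) (q ^ t) :=
        Nat.Coprime.pow _ _ ((Nat.coprime_primes hp hqp).mpr hpq)
      have hdvd' : p ^ (s + 1) ∣ q ^ t * m' := by rwa [hmm']
      exact hpns (hcop.dvd_of_dvd_mul_left hdvd')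
    rcases hq14 with hq1 | hq3
    · refine hrec ?_
      rw [Nat.pow_mod, hq1, one_pow]
      norm_num
    · rcases Nat.even_or_odd t with hte | hto
      · refine hrec ?_
        obtain ⟨r, hr⟩ := hte
        rw [Nat.pow_mod, hq3, hr, ← two_mul, pow_mul]
        rw [Nat.pow_mod]
        norm_num
      · exact ⟨q, t, hqp, hq3, hto, hqt_dvd, hqt_not⟩

/-- The kill lemma: if `N` is divisible by `2^(2k)` (with `L < 2^k`) and by
`p^(2*(log_p L + 1))` for every prime `p ≤ L` with `p % 4 = 3`, then for
`1 ≤ h ≤ L` the number `N - h` is not a sum of two squares. -/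
private lemma kill {L k N h : ℕ}
    (hN2 : 2 ^ (2 * k) ∣ N)
    (hNP : ∀ p : ℕ, p.Prime → p % 4 = 3 → p ≤ L → p ^ (2 * (Nat.log p L + 1)) ∣ N)
    (hNsz : 2 ^ (2 * k) * (L + 1) ≤ N)
    (hkL : L < 2 ^ k)
    (hh1 : 1 ≤ h) (hhL : h ≤ L) :
    ¬ ∃ a b : ℕ, N - h = a ^ 2 + b ^ 2 := by
  have hL1 : 1 ≤ L := le_trans hh1 hhL
  have hk1 : 1 ≤ k := by
    by_contra hc
    interval_cases k
    · simp at hkL; omega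
  -- split h into 2-part and odd part
  obtain ⟨j, m, hm2, hhjm⟩ := Nat.exists_eq_pow_mul_and_not_dvd (show h ≠ 0 by omega) 2 (by norm_num)
  have hmodd : m % 2 = 1 := by
    rcases Nat.even_or_odd m with he | ho
    · exact absurd he.two_dvd hm2
    · exact Nat.odd_iff.mp ho
  have hm0 : 0 < m := by
    rcases Nat.eq_zero_or_pos m with rfl | h'
    · omega
    · exact h'
  have hmh : m ∣ h := ⟨2 ^ j, by rw [hhjm]; ring⟩
  have hmL : m ≤ L := le_trans (Nat.le_of_dvd (by omega) hmh) hhL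
  have h2j : 2 ^ j ≤ h := le_trans (Nat.le_of_dvd (by omega) ⟨m, hhjm⟩) (le_refl h)
  have hjk : j < k := by
    have : 2 ^ j < 2 ^ k := lt_of_le_of_lt (le_trans h2j hhL) hkL
    exact (Nat.pow_lt_pow_iff_right (by norm_num)).mp this
  have hj2k : j + 2 ≤ 2 * k := by omega
  have hhN : h < N := by
    have : 2 ^ (2 * k) * (L + 1) ≥ L + 1 := Nat.le_mul_of_pos_left _ (Nat.pow_pos (by norm_num))
    omega
  have hm4 : m % 4 = 1 ∨ m % 4 = 3 := by omega
  rcases hm4 with hm1 | hm3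
  · -- 2-adic case: odd part of h is 1 mod 4
    have h2jN : 2 ^ j ∣ N := dvd_trans (pow_dvd_pow 2 (by omega : j ≤ 2 * k)) hN2
    set N2 := N / 2 ^ j with hN2def
    have hNN2 : N = 2 ^ j * N2 := (Nat.mul_div_cancel' h2jN).symm
    have h4N2 : 4 ∣ N2 := by
      have h22 : 2 ^ j * 4 ∣ N := by
        have : 2 ^ (j + 2) ∣ N := dvd_trans (pow_dvd_pow 2 hj2k) hN2
        rwa [pow_add] at this
      rw [hNN2] at h22
      exact (mul_dvd_mul_iff_left (show (2:ℕ) ^ j ≠ 0 by positivity)).mp h22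
    have hN2m : m < N2 := by
      have hc : 2 ^ j * N2 = N := hNN2.symm
      have h1 : 2 ^ j * (L + 1) ≤ 2 ^ (2 * k) * (L + 1) :=
        Nat.mul_le_mul_right _ (pow_le_pow_right₀ (by norm_num) (by omega))
      have h2 : 2 ^ j * (L + 1) ≤ 2 ^ j * N2 := by omega
      have := Nat.le_of_mul_le_mul_left h2 (Nat.pow_pos (by norm_num))
      omega
    set y := N2 - m with hydef
    have hxy : N - h = 2 ^ j * y := by
      rw [hNN2, hhjm, hydef, Nat.mul_sub]
    have hy4 : y % 4 = 3 := by omega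
    have hyodd : Odd y := by rw [Nat.odd_iff]; omega
    obtain ⟨p, s, hp, hp3, hs, hps, hpns⟩ := exists_prime_odd_val y hyodd hy4
    have hp2 : p ≠ 2 := by rintro rfl; omega
    rw [hxy]
    refine not_sots_of_odd_val hp hp3 hs (Dvd.dvd.mul_left hps _) (fun hdvd => ?_)
    have hcop : Nat.Coprime (p ^ (s + 1)) (2 ^ j) :=
      Nat.Coprime.pow _ _ ((Nat.coprime_primes hp Nat.prime_two).mpr hp2)
    exact hpns (hcop.dvd_of_dvd_mul_left hdvd)
  · -- odd-prime case: odd part of h is 3 mod 4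
    have hm4odd : Odd m := Nat.odd_iff.mpr hmodd
    obtain ⟨p, t, hp, hp3, ht, hpm, hpnm⟩ := exists_prime_odd_val m hm4odd hm3
    have ht0 : t ≠ 0 := by have := Nat.odd_iff.mp ht; omega
    have hpd : p ∣ m := dvd_trans (dvd_pow_self p ht0) hpm
    have hpL : p ≤ L := le_trans (Nat.le_of_dvd hm0 hpd) hmL
    have hptL : p ^ t ≤ L := le_trans (Nat.le_of_dvd hm0 hpm) hmL
    have htlog : t ≤ Nat.log p L :=
      (Nat.le_log_iff_pow_le hp.one_lt (by omega)).mpr hptL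
    have hpN : p ^ (t + 1) ∣ N :=
      dvd_trans (pow_dvd_pow p (by omega : t + 1 ≤ 2 * (Nat.log p L + 1)))
        (hNP p hp hp3 hpL)
    have hph : p ^ t ∣ h := hpm.trans hmh
    have hp2 : p ≠ 2 := by rintro rfl; omega
    refine not_sots_of_odd_val hp hp3 ht
      (Nat.dvd_sub (dvd_trans (pow_dvd_pow p (Nat.le_succ t)) hpN) hph) (fun hdvd => ?_)
    have hhd : p ^ (t + 1) ∣ h := by
      have hsub : N - (N - h) = h := Nat.sub_sub_self (le_of_lt hhN)
      exact hsub ▸ Nat.dvd_sub hpN hdvd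
    rw [hhjm] at hhd
    have hcop : Nat.Coprime (p ^ (t + 1)) (2 ^ j) :=
      Nat.Coprime.pow _ _ ((Nat.coprime_primes hp Nat.prime_two).mpr hp2)
    exact hpnm (hcop.dvd_of_dvd_mul_left hhd)


/-- Chebyshev-type bound: a set of primes `≤ L` has `card * log L ≤ 6 L`. -/
private lemma card_mul_log {L : ℕ} (hL : 1 ≤ L) {P : Finset ℕ}
    (hP : P ⊆ (Finset.range (L + 1)).filter Nat.Prime) :
    (P.card : ℝ) * Real.log L ≤ 6 * L := by
  have hLpos : (0:ℝ) < L := by exact_mod_cast hL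
  have hlogLnn : 0 ≤ Real.log L := Real.log_nonneg (by exact_mod_cast hL)
  set s := Nat.sqrt L with hsdef
  set P1 := P.filter (fun p => p ≤ s) with hP1def
  set P2 := P.filter (fun p => ¬ p ≤ s) with hP2def
  have hsplit : P1.card + P2.card = P.card :=
    Finset.card_filter_add_card_filter_not _
  have hc1 : P1.card ≤ s + 1 := by
    have hsub : P1 ⊆ Finset.range (s + 1) := by
      intro p hp
      rw [Finset.mem_range]
      have := (Finset.mem_filter.mp hp).2
      omega
    calc P1.card ≤ (Finset.range (s + 1)).card := Finset.card_le_card hsub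
      _ = s + 1 := Finset.card_range _
  -- bound on the large primes
  have hprim : (∏ p ∈ (Finset.range (L + 1)).filter Nat.Prime, p) ≤ 4 ^ L :=
    primorial_le_4_pow L
  have hP2sub : P2 ⊆ (Finset.range (L + 1)).filter Nat.Prime := by
    intro p hp
    exact hP (Finset.mem_filter.mp hp).1
  have hP2prod : (∏ p ∈ P2, p) ≤ 4 ^ L := by
    refine le_trans ?_ hprim
    refine Finset.prod_le_prod_of_subset_of_one_le' hP2sub ?_
    intro i hi _
    exact (Finset.mem_filter.mp hi).2.one_lt.le
  have hP2pow : (s + 1) ^ P2.card ≤ ∏ p ∈ P2, p := by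
    refine Finset.pow_card_le_prod _ _ _ ?_
    intro p hp
    have := (Finset.mem_filter.mp hp).2
    omega
  have hP2le : (s + 1) ^ P2.card ≤ 4 ^ L := le_trans hP2pow hP2prod
  -- real versions
  have hlog2 : Real.log 2 ≤ 1 := by
    have := Real.log_le_sub_one_of_pos (by norm_num : (0:ℝ) < 2)
    linarith
  have hlog4 : Real.log 4 ≤ 2 := by
    have h4 : (4:ℝ) = 2 ^ 2 := by norm_num
    rw [h4, Real.log_pow]
    push_cast
    linarith
  have hcast : ((s:ℝ) + 1) ^ P2.card ≤ (4:ℝ) ^ L := by exact_mod_cast hP2le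
  have hc2log : (P2.card : ℝ) * Real.log ((s:ℝ) + 1) ≤ L * Real.log 4 := by
    have h := Real.log_le_log (by positivity) hcast
    rwa [Real.log_pow, Real.log_pow] at h
  have hLs : Real.log L ≤ 2 * Real.log ((s:ℝ) + 1) := by
    have h1 : (L:ℝ) ≤ ((s:ℝ) + 1) ^ 2 := by
      have := Nat.lt_succ_sqrt' L
      have h2 : (L:ℝ) < ((s + 1 : ℕ) : ℝ) ^ 2 := by exact_mod_cast this
      push_cast at h2
      linarith
    calc Real.log L ≤ Real.log (((s:ℝ) + 1) ^ 2) := Real.log_le_log hLpos h1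
      _ = 2 * Real.log ((s:ℝ) + 1) := by rw [Real.log_pow]; push_cast; ring
  have hc2 : (P2.card : ℝ) * Real.log L ≤ 4 * L := by
    have h1 : (P2.card : ℝ) * Real.log L ≤ (P2.card : ℝ) * (2 * Real.log ((s:ℝ) + 1)) := by
      refine mul_le_mul_of_nonneg_left hLs (by positivity)
    calc (P2.card : ℝ) * Real.log L ≤ 2 * ((P2.card : ℝ) * Real.log ((s:ℝ) + 1)) := by linarith
      _ ≤ 2 * (L * Real.log 4) := by linarith
      _ ≤ 4 * L := by nlinarith [hLpos]
  have hc1r : (P1.card : ℝ) * Real.log L ≤ 2 * L := by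
    have hsR : (s:ℝ) ≤ Real.sqrt L := by
      rw [show ((s:ℝ)) = ((s:ℕ):ℝ) from rfl]
      refine (Real.le_sqrt (by positivity) (by positivity)).mpr ?_
      exact_mod_cast Nat.sqrt_le' L
    have hsqrt1 : 1 ≤ Real.sqrt L := by
      rw [show (1:ℝ) = Real.sqrt 1 by simp]
      exact Real.sqrt_le_sqrt (by exact_mod_cast hL)
    have hlogsq : Real.log L = 2 * Real.log (Real.sqrt L) := by
      rw [Real.log_sqrt (le_of_lt hLpos)]; ring
    have hlogle : Real.log (Real.sqrt L) ≤ Real.sqrt L - 1 :=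
      Real.log_le_sub_one_of_pos (by linarith)
    have hmul : Real.sqrt L * Real.sqrt L = L := Real.mul_self_sqrt (le_of_lt hLpos)
    have hcard : (P1.card : ℝ) ≤ (s:ℝ) + 1 := by exact_mod_cast hc1
    calc (P1.card : ℝ) * Real.log L ≤ ((s:ℝ) + 1) * Real.log L :=
          mul_le_mul_of_nonneg_right hcard hlogLnn
      _ ≤ (Real.sqrt L + 1) * (2 * (Real.sqrt L - 1)) := by
          refine mul_le_mul (by linarith) (by linarith [hlogsq, hlogle]) hlogLnn (by linarith)
      _ = 2 * (Real.sqrt L * Real.sqrt L) - 2 := by ring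
      _ ≤ 2 * L := by rw [hmul]; linarith
  have hPsum : (P.card : ℝ) = (P1.card : ℝ) + (P2.card : ℝ) := by exact_mod_cast hsplit.symm
  calc (P.card : ℝ) * Real.log L = (P1.card : ℝ) * Real.log L + (P2.card : ℝ) * Real.log L := by
        rw [hPsum]; ring
    _ ≤ 2 * L + 4 * L := by linarith
    _ = 6 * L := by ring

set_option maxHeartbeats 2000000 in
/-- Richards's number-theoretic lemma: the sequence of sums of two squares
contains infinitely many gaps of logarithmic size. -/
theorem richards_log_gaps :
    ∃ c : ℝ, 0 < c ∧ ∀ M : ℕ, ∃ m : ℕ, M ≤ m ∧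
      (∃ k₁ k₂ : ℤ, (m : ℤ) = k₁ ^ 2 + k₂ ^ 2) ∧
      ∀ n : ℕ, m < n → (n : ℝ) < (m : ℝ) + c * Real.log (m : ℝ) →
        ¬ ∃ k₁ k₂ : ℤ, (n : ℤ) = k₁ ^ 2 + k₂ ^ 2 := by
  classical
  refine ⟨1/25, by norm_num, fun M => ?_⟩
  set L : ℕ := ⌈Real.log (M + 2)⌉₊ + 14 with hLdef
  have hL14 : 14 ≤ L := by omega
  have hL0 : (0:ℝ) < L := by exact_mod_cast (by omega : 0 < L)
  set k : ℕ := Nat.log 2 L + 2 with hkdef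
  set P : Finset ℕ := (Finset.range (L + 1)).filter (fun p => p.Prime ∧ p % 4 = 3) with hPdef
  set Pi : ℕ := ∏ p ∈ P, p ^ (2 * (Nat.log p L + 1)) with hPidef
  set Q : ℕ := 2 ^ (2 * k) * Pi with hQdef
  set B : ℕ := M + L + 14 with hBdef
  set N : ℕ := Q * B with hNdef
  have hPipos : 0 < Pi := Finset.prod_pos (fun p hp => pow_pos (Finset.mem_filter.mp hp).2.1.pos _)
  have h2kpos : (0:ℕ) < 2 ^ (2 * k) := Nat.pow_pos (by norm_num)
  have hQpos : 0 < Q := Nat.mul_pos h2kpos hPipos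
  have hBpos : 0 < B := by omega
  have hNpos : 0 < N := Nat.mul_pos hQpos hBpos
  have hkL : L < 2 ^ k := by
    calc L < 2 ^ (Nat.log 2 L + 1) := Nat.lt_pow_succ_log_self (by norm_num) L
      _ ≤ 2 ^ k := Nat.pow_le_pow_right (by norm_num) (by omega)
  have h16 : 16 ≤ 2 ^ (2 * k) := by
    calc (16:ℕ) = 2 ^ 4 := by norm_num
      _ ≤ 2 ^ (2 * k) := Nat.pow_le_pow_right (by norm_num) (by omega)
  have hN2 : 2 ^ (2 * k) ∣ N := dvd_mul_of_dvd_left (dvd_mul_right _ _) _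
  have hNP : ∀ p : ℕ, p.Prime → p % 4 = 3 → p ≤ L → p ^ (2 * (Nat.log p L + 1)) ∣ N := by
    intro p hp h3 hpL
    have hmem : p ∈ P := by
      rw [hPdef, Finset.mem_filter, Finset.mem_range]
      exact ⟨by omega, hp, h3⟩
    have h1 : p ^ (2 * (Nat.log p L + 1)) ∣ Pi :=
      Finset.dvd_prod_of_mem (fun p => p ^ (2 * (Nat.log p L + 1))) hmem
    exact dvd_mul_of_dvd_left (dvd_mul_of_dvd_right h1 _) _
  have hNsz : 2 ^ (2 * k) * (L + 1) ≤ N := by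
    have h1 : L + 1 ≤ Pi * B :=
      le_trans (by omega : L + 1 ≤ B) (Nat.le_mul_of_pos_left _ hPipos)
    calc 2 ^ (2 * k) * (L + 1) ≤ 2 ^ (2 * k) * (Pi * B) := Nat.mul_le_mul_left _ h1
      _ = N := by rw [hNdef, hQdef]; ring
  have hkill : ∀ h' : ℕ, 1 ≤ h' → h' ≤ L → ¬ ∃ a b : ℕ, N - h' = a ^ 2 + b ^ 2 :=
    fun h' h1 h2 => kill hN2 hNP hNsz hkL h1 h2
  have hNB : 16 * B ≤ N := by
    calc 16 * B ≤ 2 ^ (2 * k) * B := Nat.mul_le_mul_right _ h16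
      _ ≤ 2 ^ (2 * k) * (Pi * B) := Nat.mul_le_mul_left _ (Nat.le_mul_of_pos_left _ hPipos)
      _ = N := by rw [hNdef, hQdef]; ring
  have hPsub : P ⊆ (Finset.range (L + 1)).filter Nat.Prime := by
    intro p hp
    rw [hPdef, Finset.mem_filter] at hp
    rw [Finset.mem_filter]
    exact ⟨hp.1, hp.2.1⟩
  have hcard : ((P.card : ℝ)) * Real.log L ≤ 6 * L := card_mul_log (by omega) hPsub
  have hPile : Pi ≤ (4 ^ L * L ^ P.card) ^ 2 := by
    have hstep : ∀ p ∈ P, p ^ (2 * (Nat.log p L + 1)) ≤ (p * L) ^ 2 := by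
      intro p hp
      have h1 : p ^ (Nat.log p L + 1) ≤ p * L := by
        rw [pow_succ]
        calc p ^ Nat.log p L * p ≤ L * p :=
              Nat.mul_le_mul_right _ (Nat.pow_log_le_self p (by omega))
          _ = p * L := by ring
      calc p ^ (2 * (Nat.log p L + 1)) = (p ^ (Nat.log p L + 1)) ^ 2 := by
            rw [← pow_mul, Nat.mul_comm]
        _ ≤ (p * L) ^ 2 := Nat.pow_le_pow_left h1 2
    calc Pi ≤ ∏ p ∈ P, (p * L) ^ 2 := Finset.prod_le_prod' hstep
      _ = ((∏ p ∈ P, p) * L ^ P.card) ^ 2 := by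
          rw [Finset.prod_pow]
          congr 1
          rw [Finset.prod_mul_distrib, Finset.prod_const]
      _ ≤ (4 ^ L * L ^ P.card) ^ 2 := by
          refine Nat.pow_le_pow_left (Nat.mul_le_mul_right _ ?_) 2
          refine le_trans (Finset.prod_le_prod_of_subset_of_one_le' hPsub ?_) (primorial_le_4_pow L)
          intro i hi _
          exact (Finset.mem_filter.mp hi).2.one_lt.le
  have hNle : N ≤ 2 ^ (2 * k) * (4 ^ L * L ^ P.card) ^ 2 * B := by
    calc N = 2 ^ (2 * k) * Pi * B := by rw [hNdef, hQdef]
      _ ≤ 2 ^ (2 * k) * (4 ^ L * L ^ P.card) ^ 2 * B :=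
        Nat.mul_le_mul_right _ (Nat.mul_le_mul_left _ hPile)
  clear_value L
  clear_value k
  clear_value Pi
  clear_value Q
  clear_value B
  clear_value N
  -- the largest sum of two squares below N
  set S : ℕ → Prop := fun x => ∃ a b : ℕ, x = a ^ 2 + b ^ 2 with hSdef
  letI : DecidablePred S := Classical.decPred S
  set a0 : ℕ := Nat.sqrt (N - L - 1) with ha0def
  have ha0sq : a0 ^ 2 ≤ N - L - 1 := Nat.sqrt_le' _
  have hW : S (a0 ^ 2) := ⟨a0, 0, by ring⟩
  have ha0leN1 : a0 ^ 2 ≤ N - 1 := by omega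
  set m : ℕ := Nat.findGreatest S (N - 1) with hmdef
  have hmS : S m := Nat.findGreatest_spec ha0leN1 hW
  have hmle : m ≤ N - 1 := Nat.findGreatest_le _
  have hma : a0 ^ 2 ≤ m := Nat.le_findGreatest ha0leN1 hW
  have hmlow : m ≤ N - L - 1 := by
    by_contra hc
    push_neg at hc
    have h1 : 1 ≤ N - m := by omega
    have h2 : N - m ≤ L := by omega
    have h3 := hkill (N - m) h1 h2
    rw [Nat.sub_sub_self (by omega : m ≤ N)] at h3
    exact h3 hmS
  have hm_ge : M ≤ m := by
    obtain ⟨A, hA⟩ : ∃ A, A = a0 ^ 2 := ⟨_, rfl⟩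
    have h1 : N - L - 1 < a0 ^ 2 + 2 * a0 + 1 := by
      have h := Nat.lt_succ_sqrt' (N - L - 1)
      calc N - L - 1 < (Nat.succ (Nat.sqrt (N - L - 1))) ^ 2 := h
        _ = a0 ^ 2 + 2 * a0 + 1 := by rw [← ha0def, Nat.succ_eq_add_one]; ring
    have h2 : a0 ≤ Nat.sqrt N := Nat.sqrt_le_sqrt (by omega)
    have h3 : 16 ≤ Nat.sqrt N := Nat.le_sqrt.mpr (by omega)
    have h4 : Nat.sqrt N * Nat.sqrt N ≤ N := Nat.sqrt_le N
    have h5 : 16 * a0 ≤ N := by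
      calc 16 * a0 ≤ 16 * Nat.sqrt N := by omega
        _ ≤ Nat.sqrt N * Nat.sqrt N := Nat.mul_le_mul_right _ h3
        _ ≤ N := h4
    rw [← hA] at h1 hma
    omega
  have hm1 : 1 ≤ m := by
    have ha01 : 1 ≤ a0 := by
      rw [ha0def]
      exact Nat.le_sqrt.mpr (by omega)
    have : 1 ≤ a0 ^ 2 := Nat.one_le_pow _ _ (by omega)
    omega
  -- upper bound on log N
  have hlog2 : Real.log 2 ≤ 1 := by
    have := Real.log_le_sub_one_of_pos (by norm_num : (0:ℝ) < 2)
    linarith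
  have hlog4 : Real.log 4 ≤ 2 := by
    have h4 : (4:ℝ) = 2 ^ 2 := by norm_num
    rw [h4, Real.log_pow]
    push_cast
    linarith
  have hlogL : Real.log L ≤ (L:ℝ) - 1 := Real.log_le_sub_one_of_pos hL0
  have hlogN : Real.log N ≤ 21 * L := by
    have hNleR : (N:ℝ) ≤ (2:ℝ) ^ (2 * k) * ((4:ℝ) ^ L * (L:ℝ) ^ P.card) ^ 2 * (B:ℝ) := by
      exact_mod_cast hNle
    have hx1 : (0:ℝ) < (2:ℝ) ^ (2 * k) := by positivity
    have hx2 : (0:ℝ) < ((4:ℝ) ^ L * (L:ℝ) ^ P.card) := by positivity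
    have hx3 : (0:ℝ) < ((4:ℝ) ^ L * (L:ℝ) ^ P.card) ^ 2 := by positivity
    have hx4 : (0:ℝ) < (B:ℝ) := by exact_mod_cast hBpos
    have h := Real.log_le_log (by exact_mod_cast hNpos) hNleR
    rw [Real.log_mul (by positivity) (ne_of_gt hx4),
        Real.log_mul (ne_of_gt hx1) (ne_of_gt hx3),
        Real.log_pow, Real.log_pow,
        Real.log_mul (by positivity) (ne_of_gt (by positivity : (0:ℝ) < (L:ℝ) ^ P.card)),
        Real.log_pow, Real.log_pow] at h
    -- h : log N ≤ (2k) log 2 + 2 * (L log 4 + card * log L) + log B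
    have hklin : (k:ℝ) ≤ (L:ℝ) + 2 := by
      have : Nat.log 2 L ≤ L := Nat.log_le_self 2 L
      have : k ≤ L + 2 := by omega
      exact_mod_cast this
    have t1 : ((2 * k : ℕ):ℝ) * Real.log 2 ≤ 2 * L + 4 := by
      have hlog2nn : (0:ℝ) ≤ Real.log 2 := Real.log_nonneg (by norm_num)
      have h2k : ((2 * k : ℕ):ℝ) ≤ 2 * (L:ℝ) + 4 := by push_cast; linarith
      calc ((2 * k : ℕ):ℝ) * Real.log 2 ≤ (2 * (L:ℝ) + 4) * 1 :=
            mul_le_mul h2k hlog2 hlog2nn (by positivity)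
        _ = 2 * L + 4 := by ring
    have t2 : (L:ℝ) * Real.log 4 ≤ 2 * L := by
      calc (L:ℝ) * Real.log 4 ≤ (L:ℝ) * 2 :=
            mul_le_mul_of_nonneg_left hlog4 (le_of_lt hL0)
        _ = 2 * L := by ring
    have t3 : Real.log B ≤ 2 * L := by
      have hBle : (B:ℝ) ≤ ((M:ℝ) + 2) * ((L:ℝ) + 14) := by
        have : (B:ℝ) = (M:ℝ) + (L:ℝ) + 14 := by rw [hBdef]; push_cast; ring
        nlinarith [Nat.cast_nonneg (α := ℝ) M, Nat.cast_nonneg (α := ℝ) L]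
      have hlogB : Real.log B ≤ Real.log (((M:ℝ) + 2) * ((L:ℝ) + 14)) :=
        Real.log_le_log (by exact_mod_cast hBpos) hBle
      rw [Real.log_mul (by positivity) (by positivity)] at hlogB
      have hm2 : Real.log ((M:ℝ) + 2) ≤ (L:ℝ) - 14 := by
        have hceil := Nat.le_ceil (Real.log ((M:ℝ) + 2))
        have : ((⌈Real.log ((M:ℝ) + 2)⌉₊ : ℕ) : ℝ) = (L:ℝ) - 14 := by
          rw [hLdef]; push_cast; ring
        linarith [hceil, this]
      have hl14 : Real.log ((L:ℝ) + 14) ≤ (L:ℝ) := by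
        have h2L : (L:ℝ) + 14 ≤ 2 * L := by
          have : (14:ℝ) ≤ (L:ℝ) := by exact_mod_cast hL14
          linarith
        have := Real.log_le_log (by positivity) h2L
        rw [show (2:ℝ) * L = 2 * L from rfl, Real.log_mul (by norm_num) (ne_of_gt hL0)] at this
        linarith
      linarith
    calc Real.log N ≤ ((2 * k : ℕ):ℝ) * Real.log 2 +
          2 * ((L:ℝ) * Real.log 4 + (P.card : ℝ) * Real.log L) + Real.log B := by
            push_cast at h ⊢
            linarith
      _ ≤ (2 * L + 4) + 2 * (2 * L + 6 * L) + 2 * L := by linarith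
      _ ≤ 21 * L := by
          have : (14:ℝ) ≤ (L:ℝ) := by exact_mod_cast hL14
          linarith
  -- conclusion
  refine ⟨m, hm_ge, ?_, ?_⟩
  · obtain ⟨a, b, hab⟩ := hmS
    exact ⟨a, b, by exact_mod_cast hab⟩
  · intro n hn1 hn2
    rintro ⟨k1, k2, hk⟩
    have hmN : m ≤ N := by omega
    have hlogm : Real.log m ≤ 21 * L :=
      le_trans (Real.log_le_log (by exact_mod_cast hm1) (by exact_mod_cast hmN)) hlogN
    have hnN : n ≤ N - 1 := by
      have h1 : (m:ℝ) ≤ (N:ℝ) - (L:ℝ) - 1 := by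
        have hcast : ((N - L - 1 : ℕ):ℝ) = (N:ℝ) - (L:ℝ) - 1 := by
          have hLN : L + 1 ≤ N := by omega
          push_cast [Nat.cast_sub (by omega : L ≤ N), Nat.cast_sub (by omega : 1 ≤ N - L)]
          ring
        rw [← hcast]
        exact_mod_cast hmlow
      have h2 : (1/25 : ℝ) * Real.log m ≤ (21/25) * L := by linarith
      have h3 : (21/25 : ℝ) * L ≤ (L:ℝ) - 1 := by
        have : (14:ℝ) ≤ (L:ℝ) := by exact_mod_cast hL14
        linarith
      have h4 : (n:ℝ) < (N:ℝ) - 2 := by linarith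
      have h5 : n + 2 < N := by
        have hc : ((n:ℝ)) + 2 < (N:ℝ) := by linarith
        exact_mod_cast hc
      omega
    have hwit : S n := by
      refine ⟨k1.natAbs, k2.natAbs, ?_⟩
      have hcast : ((k1.natAbs ^ 2 + k2.natAbs ^ 2 : ℕ) : ℤ) = (n:ℤ) := by
        push_cast
        rw [sq_abs, sq_abs]
        exact hk.symm
      exact_mod_cast hcast.symm
    exact Nat.findGreatest_is_greatest (by rw [← hmdef]; exact hn1) hnN hwit
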